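/- arXiv:2409.17148 — 6 statements merged into one kernel-verified Lean document; each statement's English description precedes it below -/
import Mathlib

section
/- For the rook polynomials P_{m,n}(z) generated by 1/(1-2s-2t-zst), the diagonal polynomials satisfy P_{m,m}(z) = z^m · L_m(8/z + 1) for z ≠ 0, where L_m is the m-th Legendre polynomial. -/
open Finset

noncomputable def Tc (z : ℂ) (m n k : ℕ) : ℂ :=
  ((m + n - k).choose n : ℂ) * (n.choose k : ℂ) * 2 ^ (m + n) * (z / 4) ^ k

noncomputable def Ec (z : ℂ) (m n : ℕ) : ℂ := ∑ k ∈ Finset.range (n + 1), Tc z m n k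

lemma Tc_eq_zero (z : ℂ) {m n k : ℕ} (h : n < k) : Tc z m n k = 0 := by
  simp [Tc, Nat.choose_eq_zero_of_lt h]

lemma Ec_pad (z : ℂ) (m n N : ℕ) (h : n + 1 ≤ N) :
    Ec z m n = ∑ k ∈ Finset.range N, Tc z m n k := by
  rw [Ec]
  refine Finset.sum_subset (Finset.range_subset_range.2 h) ?_
  intro k _ hk
  simp only [Finset.mem_range, not_lt] at hk
  exact Tc_eq_zero z (by omega)

lemma Ec_zero_right (z : ℂ) (m : ℕ) : Ec z m 0 = 2 ^ m := by
  simp [Ec, Tc]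

lemma Ec_zero_left (z : ℂ) (n : ℕ) : Ec z 0 n = 2 ^ n := by
  rw [Ec, Finset.sum_eq_single 0]
  · simp [Tc]
  · intro k hk hk0
    rcases le_or_gt k n with h | h
    · simp [Tc, Nat.choose_eq_zero_of_lt (show n - k < n by omega)]
    · exact Tc_eq_zero z h
  · simp

lemma Ec_rec (z : ℂ) (m n : ℕ) :
    Ec z (m + 1) (n + 1) = 2 * Ec z m (n + 1) + 2 * Ec z (m + 1) n + z * Ec z m n := by
  have h1 : Ec z (m + 1) n = ∑ k ∈ Finset.range (n + 2), Tc z (m + 1) n k :=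
    Ec_pad z (m + 1) n (n + 2) (by omega)
  have h2 : z * Ec z m n = ∑ k ∈ Finset.range (n + 2),
      (fun k => match k with | 0 => (0 : ℂ) | (k + 1) => z * Tc z m n k) k := by
    rw [Finset.sum_range_succ']
    simp [Ec, Finset.mul_sum]
  rw [show n + 2 = (n+1)+1 from rfl] at h1 h2
  rw [Ec, Ec, h1, h2, Finset.mul_sum, Finset.mul_sum, ← Finset.sum_add_distrib,
    ← Finset.sum_add_distrib]
  refine Finset.sum_congr rfl ?_
  rintro (_ | k) hk
  · simp only [Tc]
    rw [show m + 1 + (n + 1) - 0 = (m + n + 1) + 1 by omega, Nat.choose_succ_succ',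
      show m + (n+1) - 0 = m + n + 1 by omega, show m + 1 + n - 0 = m + n + 1 by omega,
      show m + 1 + (n + 1) = (m + n + 1) + 1 by omega,
      show m + (n + 1) = m + n + 1 by omega, show m + 1 + n = m + n + 1 by omega]
    simp only [Nat.choose_zero_right]
    push_cast
    ring
  · simp only [Finset.mem_range] at hk
    have hkn : k ≤ n := by omega
    simp only [Tc]
    rw [show m + 1 + (n + 1) - (k + 1) = (m + n - k) + 1 by omega, Nat.choose_succ_succ',
      Nat.choose_succ_succ' n k,
      show m + (n + 1) - (k + 1) = m + n - k by omega,
      show m + 1 + n - (k + 1) = m + n - k by omega,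
      show m + 1 + (n + 1) = (m + n) + 2 by omega,
      show m + (n + 1) = (m + n) + 1 by omega, show m + 1 + n = (m + n) + 1 by omega,
      pow_succ (z/4) k]
    push_cast
    ring

set_option maxHeartbeats 1000000

lemma keyC (z : ℂ) (a j : ℕ) :
    (((j + (a + 2) : ℕ) : ℂ) + 2) * Tc z (j + (a+2) + 2) (j + (a+2) + 2) (j + 2)
      = (2 * ((j + (a + 2) : ℕ) : ℂ) + 3) * (z * Tc z (j + (a+2) + 1) (j + (a+2) + 1) (j + 1)) +
        8 * (2 * ((j + (a + 2) : ℕ) : ℂ) + 3) * Tc z (j + (a+2) + 1) (j + (a+2) + 1) (j + 2) -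
        (((j + (a + 2) : ℕ) : ℂ) + 1) * (z ^ 2 * Tc z (j + (a+2)) (j + (a+2)) j) := by
  have hj1 : ((j : ℂ) + 1) ≠ 0 := by
    have h := Nat.cast_ne_zero (R := ℂ) |>.2 (show j + 1 ≠ 0 by omega); push_cast at h; exact h
  have hj2 : ((j : ℂ) + 2) ≠ 0 := by
    have h := Nat.cast_ne_zero (R := ℂ) |>.2 (show j + 2 ≠ 0 by omega); push_cast at h; exact h
  have hb3 : ((a : ℂ) + (j : ℂ) + 3) ≠ 0 := by
    have h := Nat.cast_ne_zero (R := ℂ) |>.2 (show a + j + 3 ≠ 0 by omega); push_cast at h; exact h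
  have hb4 : ((a : ℂ) + (j : ℂ) + 4) ≠ 0 := by
    have h := Nat.cast_ne_zero (R := ℂ) |>.2 (show a + j + 4 ≠ 0 by omega); push_cast at h; exact h
  -- multiplicative relations between binomial coefficients
  have h1 : (((2*a+j+5).choose (a+j+3) : ℕ) : ℂ) * ((a:ℂ)+(j:ℂ)+3)
      = (2*(a:ℂ)+(j:ℂ)+5) * (((2*a+j+4).choose (a+j+2) : ℕ) : ℂ) := by
    have := Nat.add_one_mul_choose_eq (2*a+j+4) (a+j+2)
    rw [show 2*a+j+4+1 = 2*a+j+5 by omega, show a+j+2+1 = a+j+3 by omega] at this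
    exact_mod_cast this.symm
  have h2 : (((2*a+j+6).choose (a+j+4) : ℕ) : ℂ) * ((a:ℂ)+(j:ℂ)+4)
      = (2*(a:ℂ)+(j:ℂ)+6) * (((2*a+j+5).choose (a+j+3) : ℕ) : ℂ) := by
    have := Nat.add_one_mul_choose_eq (2*a+j+5) (a+j+3)
    rw [show 2*a+j+5+1 = 2*a+j+6 by omega, show a+j+3+1 = a+j+4 by omega] at this
    exact_mod_cast this.symm
  have h3 : (((2*a+j+4).choose (a+j+3) : ℕ) : ℂ) * ((a:ℂ)+(j:ℂ)+3)
      = (((2*a+j+4).choose (a+j+2) : ℕ) : ℂ) * ((a:ℂ)+2) := by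
    have := Nat.choose_succ_right_eq (2*a+j+4) (a+j+2)
    rw [show a+j+2+1 = a+j+3 by omega, show 2*a+j+4 - (a+j+2) = a+2 by omega] at this
    exact_mod_cast this
  have h4 : (((a+j+3).choose (j+1) : ℕ) : ℂ) * ((j:ℂ)+1)
      = ((a:ℂ)+(j:ℂ)+3) * (((a+j+2).choose j : ℕ) : ℂ) := by
    have := Nat.add_one_mul_choose_eq (a+j+2) j
    rw [show a+j+2+1 = a+j+3 by omega] at this
    exact_mod_cast this.symm
  have h5 : (((a+j+4).choose (j+2) : ℕ) : ℂ) * ((j:ℂ)+2)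
      = ((a:ℂ)+(j:ℂ)+4) * (((a+j+3).choose (j+1) : ℕ) : ℂ) := by
    have := Nat.add_one_mul_choose_eq (a+j+3) (j+1)
    rw [show a+j+3+1 = a+j+4 by omega, show j+1+1 = j+2 by omega] at this
    exact_mod_cast this.symm
  have h6 : (((a+j+3).choose (j+2) : ℕ) : ℂ) * ((j:ℂ)+2)
      = (((a+j+3).choose (j+1) : ℕ) : ℂ) * ((a:ℂ)+2) := by
    have := Nat.choose_succ_right_eq (a+j+3) (j+1)
    rw [show j+1+1 = j+2 by omega, show a+j+3 - (j+1) = a+2 by omega] at this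
    exact_mod_cast this
  simp only [Tc]
  rw [show j + (a+2) + 2 + (j + (a+2) + 2) - (j+2) = 2*a+j+6 by omega,
      show j + (a+2) + 1 + (j + (a+2) + 1) - (j+1) = 2*a+j+5 by omega,
      show j + (a+2) + 1 + (j + (a+2) + 1) - (j+2) = 2*a+j+4 by omega,
      show j + (a+2) + (j + (a+2)) - j = 2*a+j+4 by omega,
      show j + (a+2) + 2 + (j + (a+2) + 2) = 2*(a+j) + 8 by omega,
      show j + (a+2) + 1 + (j + (a+2) + 1) = 2*(a+j) + 6 by omega,
      show j + (a+2) + (j + (a+2)) = 2*(a+j) + 4 by omega,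
      show j + (a+2) + 2 = a+j+4 by omega,
      show j + (a+2) + 1 = a+j+3 by omega,
      show j + (a+2) = a+j+2 by omega,
      pow_add (2:ℂ) (2*(a+j)) 8, pow_add (2:ℂ) (2*(a+j)) 6, pow_add (2:ℂ) (2*(a+j)) 4,
      pow_add (z/4) j 2, pow_add (z/4) j 1]
  push_cast
  generalize ((z/4 : ℂ))^j = W
  generalize (2:ℂ)^(2*(a+j)) = B
  refine mul_left_cancel₀
    (show ((a:ℂ)+(j:ℂ)+3)*(((j:ℂ)+1)*((j:ℂ)+2)) ≠ 0 from
      mul_ne_zero hb3 (mul_ne_zero hj1 hj2)) ?_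
  linear_combination (16*B*W*z^2) * (
      (((a:ℂ)+(j:ℂ)+3)*((j:ℂ)+1)*((j:ℂ)+2)) * (((a+j+4).choose (j+2) : ℕ) : ℂ) * h2
    + (((a:ℂ)+(j:ℂ)+3)*((j:ℂ)+1)*(2*(a:ℂ)+(j:ℂ)+6)) * (((2*a+j+5).choose (a+j+3) : ℕ) : ℂ) * h5
    + (((j:ℂ)+1)*(2*(a:ℂ)+(j:ℂ)+6)*((a:ℂ)+(j:ℂ)+4)) * (((a+j+3).choose (j+1) : ℕ) : ℂ) * h1
    + ((2*(a:ℂ)+(j:ℂ)+6)*(2*(a:ℂ)+(j:ℂ)+5)*((a:ℂ)+(j:ℂ)+4)) * (((2*a+j+4).choose (a+j+2) : ℕ) : ℂ) * h4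
    - ((2*((a:ℂ)+(j:ℂ)+2)+3)*((j:ℂ)+1)*((j:ℂ)+2)) * (((a+j+3).choose (j+1) : ℕ) : ℂ) * h1
    - ((2*((a:ℂ)+(j:ℂ)+2)+3)*((j:ℂ)+2)*(2*(a:ℂ)+(j:ℂ)+5)) * (((2*a+j+4).choose (a+j+2) : ℕ) : ℂ) * h4
    - (2*(2*((a:ℂ)+(j:ℂ)+2)+3)*((j:ℂ)+1)*((j:ℂ)+2)) * (((a+j+3).choose (j+2) : ℕ) : ℂ) * h3
    - (2*(2*((a:ℂ)+(j:ℂ)+2)+3)*((j:ℂ)+1)*((a:ℂ)+2)) * (((2*a+j+4).choose (a+j+2) : ℕ) : ℂ) * h6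
    - (2*(2*((a:ℂ)+(j:ℂ)+2)+3)*((a:ℂ)+2)^2) * (((2*a+j+4).choose (a+j+2) : ℕ) : ℂ) * h4 )

noncomputable def S1 (z : ℂ) (m : ℕ) : ℕ → ℂ
  | 0 => 0
  | (k+1) => z * Tc z (m+1) (m+1) k

noncomputable def S2 (z : ℂ) (m : ℕ) : ℕ → ℂ
  | 0 => 0
  | 1 => 0
  | (k+2) => z^2 * Tc z m m k

lemma keyA (z : ℂ) (j : ℕ) :
    (((j : ℕ) : ℂ) + 2) * Tc z (j+2) (j+2) (j+2)
      = (2 * ((j : ℕ) : ℂ) + 3) * (z * Tc z (j+1) (j+1) (j+1)) +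
        8 * (2 * ((j : ℕ) : ℂ) + 3) * Tc z (j+1) (j+1) (j+2) -
        (((j : ℕ) : ℂ) + 1) * (z ^ 2 * Tc z j j j) := by
  simp only [Tc]
  rw [show j+2+(j+2)-(j+2) = j+2 by omega,
      show j+1+(j+1)-(j+1) = j+1 by omega,
      show j+1+(j+1)-(j+2) = j by omega,
      show j+j-j = j by omega,
      show j+2+(j+2) = 2*j+4 by omega,
      show j+1+(j+1) = 2*j+2 by omega,
      show j+j = 2*j by omega,
      pow_add (2:ℂ) (2*j) 4, pow_add (2:ℂ) (2*j) 2,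
      pow_add (z/4) j 2, pow_add (z/4) j 1,
      Nat.choose_self, Nat.choose_self, Nat.choose_self,
      Nat.choose_eq_zero_of_lt (show j < j+1 by omega)]
  push_cast
  ring

lemma keyB (z : ℂ) (j : ℕ) :
    (((j + 1 : ℕ) : ℂ) + 2) * Tc z (j+1+2) (j+1+2) (j+2)
      = (2 * ((j + 1 : ℕ) : ℂ) + 3) * (z * Tc z (j+1+1) (j+1+1) (j+1)) +
        8 * (2 * ((j + 1 : ℕ) : ℂ) + 3) * Tc z (j+1+1) (j+1+1) (j+2) -
        (((j + 1 : ℕ) : ℂ) + 1) * (z ^ 2 * Tc z (j+1) (j+1) j) := by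
  have c1 : (j+4).choose (j+3) = j+4 := by simpa using Nat.choose_succ_self_right (j+3)
  have c2 : (j+3).choose (j+2) = j+3 := by simpa using Nat.choose_succ_self_right (j+2)
  have c3 : (j+2).choose (j+1) = j+2 := by simpa using Nat.choose_succ_self_right (j+1)
  have c4 : (j+1).choose j = j+1 := Nat.choose_succ_self_right j
  simp only [Tc]
  rw [show j+1+2+(j+1+2)-(j+2) = j+4 by omega,
      show j+1+1+(j+1+1)-(j+1) = j+3 by omega,
      show j+1+1+(j+1+1)-(j+2) = j+2 by omega,
      show j+1+(j+1)-j = j+2 by omega,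
      show j+1+2+(j+1+2) = 2*j+6 by omega,
      show j+1+1+(j+1+1) = 2*j+4 by omega,
      show j+1+(j+1) = 2*j+2 by omega,
      show j+1+2 = j+3 by omega, show j+1+1 = j+2 by omega,
      pow_add (2:ℂ) (2*j) 6, pow_add (2:ℂ) (2*j) 4, pow_add (2:ℂ) (2*j) 2,
      pow_add (z/4) j 2, pow_add (z/4) j 1,
      c1, c2, c3, c4, Nat.choose_self]
  push_cast
  ring

lemma key0 (z : ℂ) (m : ℕ) :
    ((m : ℂ) + 2) * Tc z (m+2) (m+2) 0
      = 8 * (2 * (m : ℂ) + 3) * Tc z (m+1) (m+1) 0 := by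
  have hc := Nat.succ_mul_centralBinom_succ (m+1)
  simp only [Nat.centralBinom, Nat.succ_eq_add_one] at hc
  rw [show m+1+1 = m+2 by omega] at hc
  simp only [Tc, Nat.choose_zero_right]
  rw [show m+2+(m+2)-0 = 2*(m+2) by omega,
      show m+1+(m+1)-0 = 2*(m+1) by omega,
      show m+2+(m+2) = 2*(m+1)+2 by omega,
      show m+1+(m+1) = 2*(m+1) by omega,
      pow_add (2:ℂ) (2*(m+1)) 2]
  have hc' : ((m:ℂ)+2) * (((2*(m+2)).choose (m+2) : ℕ) : ℂ)
      = 2*(2*(m:ℂ)+3) * (((2*(m+1)).choose (m+1) : ℕ) : ℂ) := by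
    exact_mod_cast congrArg (Nat.cast : ℕ → ℂ) hc
  push_cast at hc' ⊢
  linear_combination ((2:ℂ)^(2*(m+1)) * 4) * hc'

lemma key1 (z : ℂ) (m : ℕ) :
    ((m : ℂ) + 2) * Tc z (m+2) (m+2) 1
      = (2 * (m : ℂ) + 3) * (z * Tc z (m+1) (m+1) 0) +
        8 * (2 * (m : ℂ) + 3) * Tc z (m+1) (m+1) 1 := by
  have h1 : (2*m+3).choose (m+2) * (m+2) = (2*m+3) * (2*m+2).choose (m+1) := by
    have := Nat.add_one_mul_choose_eq (2*m+2) (m+1)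
    rw [show 2*m+2+1 = 2*m+3 by omega, show m+1+1 = m+2 by omega] at this
    omega
  have h2 : (2*m+2).choose (m+1) = 2 * (2*m+1).choose (m+1) := by
    have hp : (2*m+2).choose (m+1) = (2*m+1).choose m + (2*m+1).choose (m+1) := by
      rw [show 2*m+2 = (2*m+1)+1 by omega]
      exact Nat.choose_succ_succ' (2*m+1) m
    have hs : (2*m+1).choose (m+1) = (2*m+1).choose m := Nat.choose_symm_half m
    omega
  have h1c : (((2*m+3).choose (m+2) : ℕ) : ℂ) * ((m:ℂ)+2)
      = (2*(m:ℂ)+3) * (((2*m+2).choose (m+1) : ℕ) : ℂ) := by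
    exact_mod_cast congrArg (Nat.cast : ℕ → ℂ) h1
  have h2c : (((2*m+2).choose (m+1) : ℕ) : ℂ) = 2 * (((2*m+1).choose (m+1) : ℕ) : ℂ) := by
    exact_mod_cast congrArg (Nat.cast : ℕ → ℂ) h2
  simp only [Tc]
  rw [show m+2+(m+2)-1 = 2*m+3 by omega,
      show m+1+(m+1)-0 = 2*m+2 by omega,
      show m+1+(m+1)-1 = 2*m+1 by omega,
      show m+2+(m+2) = 2*(m+1)+2 by omega,
      show m+1+(m+1) = 2*(m+1) by omega,
      pow_add (2:ℂ) (2*(m+1)) 2,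
      show m+2 = (m+1)+1 from rfl, Nat.choose_one_right, Nat.choose_zero_right,
      Nat.choose_one_right]
  push_cast at h1c h2c ⊢
  linear_combination ((2:ℂ)^(2*(m+1)) * z) * (((m:ℂ)+2) * h1c + ((m:ℂ)+1)*(2*(m:ℂ)+3) * h2c)

lemma Ec_diag_rec (z : ℂ) (m : ℕ) :
    ((m:ℂ)+2) * Ec z (m+2) (m+2)
      = (2*(m:ℂ)+3) * (z * Ec z (m+1) (m+1)) + 8*(2*(m:ℂ)+3) * Ec z (m+1) (m+1)
        - ((m:ℂ)+1) * (z^2 * Ec z m m) := by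
  have pad2 : Ec z (m+2) (m+2) = ∑ k ∈ Finset.range (m+3), Tc z (m+2) (m+2) k :=
    Ec_pad z _ _ _ (by omega)
  have pad1 : Ec z (m+1) (m+1) = ∑ k ∈ Finset.range (m+3), Tc z (m+1) (m+1) k :=
    Ec_pad z _ _ _ (by omega)
  have hs1 : z * Ec z (m+1) (m+1) = ∑ k ∈ Finset.range (m+3), S1 z m k := by
    rw [show m+3 = (m+2)+1 from rfl, Finset.sum_range_succ']
    simp [S1, Ec, Finset.mul_sum]
  have hs2 : z^2 * Ec z m m = ∑ k ∈ Finset.range (m+3), S2 z m k := by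
    rw [show m+3 = (m+2)+1 from rfl, Finset.sum_range_succ',
        show m+2 = (m+1)+1 from rfl, Finset.sum_range_succ']
    simp [S2, Ec, Finset.mul_sum]
  rw [pad2, hs1, hs2, pad1, Finset.mul_sum, Finset.mul_sum, Finset.mul_sum, Finset.mul_sum,
      ← Finset.sum_add_distrib, ← Finset.sum_sub_distrib]
  refine Finset.sum_congr rfl ?_
  rintro (_ | _ | k) hk
  · simp only [S1, S2]
    rw [key0 z m]
    ring
  · simp only [S1, S2]
    rw [key1 z m]
    ring
  · simp only [Finset.mem_range] at hk
    have hkm : k ≤ m := by omega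
    obtain ⟨d, rfl⟩ := Nat.exists_eq_add_of_le hkm
    simp only [S1, S2]
    rcases d with _ | _ | a
    · exact keyA z k
    · exact keyB z k
    · exact keyC z a k

/-- For the rook polynomials `P m n` (defined by `P 0 0 = 1`, vanishing for negative
indices, and `P m n = 2 P (m-1) n + 2 P m (n-1) + z P (m-1) (n-1)`), the diagonal
satisfies `P m m z = z^m * L m (8/z + 1)` for `z ≠ 0`, where `L` is the sequence of
Legendre polynomials (characterized by `L 0 = 1`, `L 1 = id` and Bonnet's recurrence). -/
theorem rook_diagonal_eq_legendre
    (L : ℕ → ℂ → ℂ)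
    (hL0 : ∀ x, L 0 x = 1)
    (hL1 : ∀ x, L 1 x = x)
    (hLrec : ∀ (m : ℕ) (x : ℂ),
      (m + 2 : ℂ) * L (m + 2) x = (2 * m + 3) * x * L (m + 1) x - (m + 1 : ℂ) * L m x)
    (P : ℂ → ℤ → ℤ → ℂ)
    (h00 : ∀ z, P z 0 0 = 1)
    (hneg : ∀ z, ∀ m n : ℤ, m < 0 ∨ n < 0 → P z m n = 0)
    (hrec : ∀ z, ∀ m n : ℤ, 0 ≤ m → 0 ≤ n → (m, n) ≠ (0, 0) →
      P z m n = 2 * P z (m - 1) n + 2 * P z m (n - 1) + z * P z (m - 1) (n - 1)) :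
    ∀ (m : ℕ) (z : ℂ), z ≠ 0 → P z m m = z ^ m * L m (8 / z + 1) := by
  intro M z hz
  have hPE : ∀ m n : ℕ, P z (m : ℤ) (n : ℤ) = Ec z m n := by
    have H : ∀ s m n : ℕ, m + n ≤ s → P z (m : ℤ) (n : ℤ) = Ec z m n := by
      intro s
      induction s with
      | zero =>
        intro m n h
        obtain ⟨rfl, rfl⟩ : m = 0 ∧ n = 0 := by omega
        simpa [Ec, Tc] using h00 z
      | succ s ih =>
        intro m n h
        rcases m with _ | m <;> rcases n with _ | n
        · simpa [Ec, Tc] using h00 z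
        · -- (0, n+1)
          have hr := hrec z 0 ((n:ℤ)+1) le_rfl (by omega)
            (by refine fun hc => ?_; rw [Prod.mk.injEq] at hc; omega)
          rw [show ((n:ℤ)+1-1) = (n:ℤ) by ring, show ((0:ℤ)-1) = -1 by ring] at hr
          rw [hneg z (-1) _ (Or.inl (by norm_num)), hneg z (-1) _ (Or.inl (by norm_num))] at hr
          have e1 := ih 0 n (by omega)
          push_cast at hr e1 ⊢
          rw [hr, e1, Ec_zero_left, Ec_zero_left]
          ring
        · -- (m+1, 0)
          have hr := hrec z ((m:ℤ)+1) 0 (by omega) le_rfl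
            (by refine fun hc => ?_; rw [Prod.mk.injEq] at hc; omega)
          rw [show ((m:ℤ)+1-1) = (m:ℤ) by ring, show ((0:ℤ)-1) = -1 by ring] at hr
          rw [hneg z _ (-1) (Or.inr (by norm_num)), hneg z _ (-1) (Or.inr (by norm_num))] at hr
          have e1 := ih m 0 (by omega)
          push_cast at hr e1 ⊢
          rw [hr, e1, Ec_zero_right, Ec_zero_right]
          ring
        · -- (m+1, n+1)
          have hr := hrec z ((m:ℤ)+1) ((n:ℤ)+1) (by omega) (by omega)
            (by refine fun hc => ?_; rw [Prod.mk.injEq] at hc; omega)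
          rw [show ((m:ℤ)+1-1) = (m:ℤ) by ring, show ((n:ℤ)+1-1) = (n:ℤ) by ring] at hr
          have e1 := ih m (n+1) (by omega)
          have e2 := ih (m+1) n (by omega)
          have e3 := ih m n (by omega)
          push_cast at hr e1 e2 e3 ⊢
          rw [hr, e1, e2, e3, Ec_rec]
    exact fun m n => H (m + n) m n le_rfl
  have hzx : z * (8 / z + 1) = z + 8 := by
    field_simp
    ring
  have key : ∀ m : ℕ, z ^ m * L m (8 / z + 1) = Ec z m m := by
    intro m
    induction m using Nat.strong_induction_on with
    | _ m ih =>
      rcases m with _ | _ | m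
      · simp [hL0, Ec, Tc]
      · rw [pow_one, hL1]
        have hE : Ec z 1 1 = 8 + z := by
          simp [Ec, Tc, Finset.sum_range_succ]
          ring
        rw [hE, mul_add, mul_div_cancel₀ _ hz]
        ring
      · have hL := hLrec m (8 / z + 1)
        have i1 := ih (m + 1) (by omega)
        have i0 := ih m (by omega)
        have hm2 : ((m : ℂ) + 2) ≠ 0 := by
          have h := Nat.cast_ne_zero (R := ℂ) |>.2 (show m + 2 ≠ 0 by omega)
          push_cast at h; exact h
        apply mul_left_cancel₀ hm2
        calc ((m:ℂ)+2) * (z^(m+2) * L (m+2) (8/z+1))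
            = z^(m+2) * (((m:ℂ)+2) * L (m+2) (8/z+1)) := by ring
          _ = z^(m+2) * ((2*(m:ℂ)+3) * (8/z+1) * L (m+1) (8/z+1) - ((m:ℂ)+1) * L m (8/z+1)) := by
              rw [hL]
          _ = (2*(m:ℂ)+3) * (z*(8/z+1)) * (z^(m+1) * L (m+1) (8/z+1))
                - ((m:ℂ)+1) * (z^2 * (z^m * L m (8/z+1))) := by ring
          _ = (2*(m:ℂ)+3) * (z * Ec z (m+1) (m+1)) + 8*(2*(m:ℂ)+3) * Ec z (m+1) (m+1)
                - ((m:ℂ)+1) * (z^2 * Ec z m m) := by rw [i1, i0, hzx]; ring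
          _ = ((m:ℂ)+2) * Ec z (m+2) (m+2) := (Ec_diag_rec z m).symm
  rw [hPE M M, ← key M]
end

section
/- For every real z < -9/4, the quartic polynomial D(t,z) = z^2 t^4 + (-2z-36) t^3 + (49-2z) t^2 - 14t + 1 has four distinct complex roots, none of which is real. -/
open Complex


set_option maxHeartbeats 2000000 in
/-- For every real `z < -9/4`, the quartic
`D(t,z) = z²t⁴ + (-2z-36)t³ + (49-2z)t² - 14t + 1` has four distinct complex roots,
none of which is real. -/
theorem queen_quartic_roots_distinct_nonreal (z : ℝ) (hz : z < -9/4) :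
    ∃ t₁ t₂ t₃ t₄ : ℂ,
      (∀ t : ℂ,
        (z : ℂ) ^ 2 * t ^ 4 + (-2 * z - 36) * t ^ 3 + (49 - 2 * z) * t ^ 2 - 14 * t + 1
          = (z : ℂ) ^ 2 * (t - t₁) * (t - t₂) * (t - t₃) * (t - t₄)) ∧
      t₁ ≠ t₂ ∧ t₁ ≠ t₃ ∧ t₁ ≠ t₄ ∧ t₂ ≠ t₃ ∧ t₂ ≠ t₄ ∧ t₃ ≠ t₄ ∧
      t₁.im ≠ 0 ∧ t₂.im ≠ 0 ∧ t₃.im ≠ 0 ∧ t₄.im ≠ 0 := by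
  have hz0 : z ≠ 0 := by linarith
  have hzc0 : (z:ℂ) ≠ 0 := by exact_mod_cast hz0
  have half_im : ∀ x : ℂ, (x/2).im = x.im/2 := by
    intro x; simp [Complex.div_im, Complex.normSq]
  -- positivity of D on ℝ
  have hpos : ∀ x : ℝ, 0 < z^2*x^4 + (-2*z-36)*x^3 + (49-2*z)*x^2 - 14*x + 1 := by
    intro x
    rcases lt_trichotomy x 0 with hx | hx | hx
    · have h1 : (0:ℝ) ≤ (z*x^2 - x - 1)^2 := sq_nonneg _
      have h2 : 0 < (-x) * (3*x-2)^2 := by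
        apply mul_pos (by linarith); nlinarith [sq_nonneg (3*x-2)]
      nlinarith [h1, h2]
    · subst hx; norm_num
    · obtain ⟨u, hu⟩ : ∃ u, u = Real.sqrt x := ⟨_, rfl⟩
      have hu2 : u^2 = x := by rw [hu]; exact Real.sq_sqrt hx.le
      have hu0 : 0 < u := by rw [hu]; exact Real.sqrt_pos.mpr hx
      have hF1 : (z+9/4)*u^4 - ((3/2)*u^2+2*u-1)^2 < 0 := by
        nlinarith [sq_nonneg ((3/2)*u^2+2*u-1), mul_pos (mul_pos hu0 hu0) (mul_pos hu0 hu0)]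
      have hF2 : (z+9/4)*u^4 - ((3/2)*u^2-2*u-1)^2 < 0 := by
        nlinarith [sq_nonneg ((3/2)*u^2-2*u-1), mul_pos (mul_pos hu0 hu0) (mul_pos hu0 hu0)]
      have key : z^2*x^4 + (-2*z-36)*x^3 + (49-2*z)*x^2 - 14*x + 1
          = ((z+9/4)*u^4 - ((3/2)*u^2+2*u-1)^2) * ((z+9/4)*u^4 - ((3/2)*u^2-2*u-1)^2) := by
        rw [← hu2]; ring
      rw [key]; exact mul_pos_of_neg_of_neg hF1 hF2
  -- any root of D is non-real
  have hroot : ∀ r : ℂ,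
      (z : ℂ) ^ 2 * r ^ 4 + (-2 * z - 36) * r ^ 3 + (49 - 2 * z) * r ^ 2 - 14 * r + 1 = 0 →
      r.im ≠ 0 := by
    intro r hr h0
    have hre : r = ((r.re : ℝ) : ℂ) := by
      apply Complex.ext <;> simp [h0]
    rw [hre] at hr
    have h2 : ((z^2*r.re^4 + (-2*z-36)*r.re^3 + (49-2*z)*r.re^2 - 14*r.re + 1 : ℝ) : ℂ) = 0 := by
      push_cast; linear_combination hr
    have h3 := Complex.ofReal_eq_zero.mp h2
    nlinarith [hpos r.re]
  -- setup
  obtain ⟨w, hwdef⟩ : ∃ w, w = Real.sqrt (-4*z-9) := ⟨_, rfl⟩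
  have hw2 : w^2 = -4*z-9 := by rw [hwdef]; exact Real.sq_sqrt (by linarith)
  have hw0 : 0 < w := by rw [hwdef]; exact Real.sqrt_pos.mpr (by linarith)
  obtain ⟨x₁, hx₁⟩ : ∃ a : ℝ, a = (z+18)/z^2 := ⟨_, rfl⟩
  obtain ⟨y₁, hy₁⟩ : ∃ a : ℝ, a = (6-z)*w/z^2 := ⟨_, rfl⟩
  obtain ⟨x₂, hx₂⟩ : ∃ a : ℝ, a = (2*z+9)/(2*z^2) := ⟨_, rfl⟩
  obtain ⟨y₂, hy₂⟩ : ∃ a : ℝ, a = 3*w/(2*z^2) := ⟨_, rfl⟩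
  obtain ⟨S, hS⟩ : ∃ a : ℂ, a = (x₁:ℂ) + (y₁:ℂ)*I := ⟨_, rfl⟩
  obtain ⟨P, hP⟩ : ∃ a : ℂ, a = (x₂:ℂ) + (y₂:ℂ)*I := ⟨_, rfl⟩
  obtain ⟨S', hS'⟩ : ∃ a : ℂ, a = (x₁:ℂ) - (y₁:ℂ)*I := ⟨_, rfl⟩
  obtain ⟨P', hP'⟩ : ∃ a : ℂ, a = (x₂:ℂ) - (y₂:ℂ)*I := ⟨_, rfl⟩
  have hy₁0 : 0 < y₁ := by
    rw [hy₁]; apply div_pos (mul_pos (by linarith) hw0) (by positivity)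
  have hwc2 : ((w:ℂ))^2 = -4*(z:ℂ)-9 := by exact_mod_cast congrArg (Complex.ofReal) hw2
  -- the quadratic factorization
  have hquad : ∀ t : ℂ,
      (z : ℂ) ^ 2 * t ^ 4 + (-2 * z - 36) * t ^ 3 + (49 - 2 * z) * t ^ 2 - 14 * t + 1
        = (z:ℂ)^2 * ((t^2 - S*t + P) * (t^2 - S'*t + P')) := by
    intro t
    rw [hS, hP, hS', hP', hx₁, hy₁, hx₂, hy₂]
    push_cast
    field_simp
    linear_combination
      ((w:ℂ)^2*(3-2*t*(6-(z:ℂ)))^2) * Complex.I_sq - (3-2*t*(6-(z:ℂ)))^2 * hwc2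
  -- square root of the discriminant
  obtain ⟨c, hc⟩ : ∃ c : ℂ, c ^ 2 = S^2 - 4*P := IsAlgClosed.exists_pow_nat_eq _ two_pos
  obtain ⟨t₁, ht₁⟩ : ∃ a : ℂ, a = (S + c)/2 := ⟨_, rfl⟩
  obtain ⟨t₂, ht₂⟩ : ∃ a : ℂ, a = (S - c)/2 := ⟨_, rfl⟩
  obtain ⟨t₃, ht₃⟩ : ∃ a : ℂ, a = (starRingEnd ℂ) t₁ := ⟨_, rfl⟩
  obtain ⟨t₄, ht₄⟩ : ∃ a : ℂ, a = (starRingEnd ℂ) t₂ := ⟨_, rfl⟩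
  have hconjS : (starRingEnd ℂ) S = S' := by
    apply Complex.ext <;> simp [hS, hS']
  have hconjP : (starRingEnd ℂ) P = P' := by
    apply Complex.ext <;> simp [hP, hP']
  have h12 : ∀ t : ℂ, (t - t₁) * (t - t₂) = t^2 - S*t + P := by
    intro t; rw [ht₁, ht₂]; linear_combination (-(1:ℂ)/4) * hc
  have h34 : ∀ t : ℂ, (t - t₃) * (t - t₄) = t^2 - S'*t + P' := by
    intro t
    have h := congrArg (starRingEnd ℂ) (h12 ((starRingEnd ℂ) t))
    simp only [map_mul, map_sub, map_add, map_pow, Complex.conj_conj, hconjS, hconjP] at h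
    rw [ht₃, ht₄]; linear_combination h
  have hfull : ∀ t : ℂ,
      (z : ℂ) ^ 2 * t ^ 4 + (-2 * z - 36) * t ^ 3 + (49 - 2 * z) * t ^ 2 - 14 * t + 1
        = (z : ℂ) ^ 2 * (t - t₁) * (t - t₂) * (t - t₃) * (t - t₄) := by
    intro t; rw [hquad t, ← h12 t, ← h34 t]; ring
  -- imaginary parts
  have hSim : S.im = y₁ := by
    rw [hS]
    simp only [Complex.add_im, Complex.mul_im, Complex.ofReal_im, Complex.ofReal_re,
      Complex.I_im, Complex.I_re]
    ring
  have ht₁im : t₁.im = (y₁ + c.im)/2 := by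
    rw [ht₁, half_im, Complex.add_im, hSim]
  have ht₂im : t₂.im = (y₁ - c.im)/2 := by
    rw [ht₂, half_im, Complex.sub_im, hSim]
  have ht₃im : t₃.im = -t₁.im := by rw [ht₃]; simp
  have ht₄im : t₄.im = -t₂.im := by rw [ht₄]; simp
  -- roots, hence non-real
  have hr₁ : t₁.im ≠ 0 := by
    apply hroot; rw [hfull t₁]; ring
  have hr₂ : t₂.im ≠ 0 := by
    apply hroot; rw [hfull t₂]; ring
  -- c ≠ 0
  have hcne : c ≠ 0 := by
    intro h0
    rw [h0] at hc
    have h1 : S^2 - 4*P = 0 := by rw [← hc]; ring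
    rw [hS, hP] at h1
    have hre := congrArg Complex.re h1
    have him := congrArg Complex.im h1
    simp [pow_two, Complex.mul_re, Complex.mul_im] at hre him
    simp only [hx₁, hy₁, hx₂, hy₂] at hre him
    field_simp at hre him
    have him' : ((z+18)*(6-z) - 3*z^2) * (4*z^2*w) = 0 := by linear_combination z^2 * him
    have h6 : (z+18)*(6-z) - 3*z^2 = 0 := by
      rcases mul_eq_zero.mp him' with h | h
      · exact h
      · exact absurd h (by positivity)
    have h6' : z^2 + 3*z - 27 = 0 := by linear_combination (-1/4)*h6
    have hre2 : z^2*(7*z^2 - 9*z - 81) = 0 := by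
      linear_combination (-z^2/16)*hre + (-(z^2*(6-z)^2)/8)*hw2
    have hre3 : 7*z^2 - 9*z - 81 = 0 := by
      rcases mul_eq_zero.mp hre2 with h | h
      · exact absurd h (pow_ne_zero 2 hz0)
      · exact h
    linarith
  refine ⟨t₁, t₂, t₃, t₄, hfull, ?_, ?_, ?_, ?_, ?_, ?_, hr₁, hr₂, ?_, ?_⟩
  · intro h
    apply hcne
    rw [ht₁, ht₂] at h
    linear_combination h
  · intro h
    have h5 := congrArg Complex.im h
    rw [ht₃im] at h5
    exact hr₁ (by linarith)
  · intro h
    have h5 := congrArg Complex.im h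
    rw [ht₄im, ht₁im, ht₂im] at h5
    have : y₁ = 0 := by linarith
    linarith
  · intro h
    have h5 := congrArg Complex.im h
    rw [ht₃im, ht₁im, ht₂im] at h5
    have : y₁ = 0 := by linarith
    linarith
  · intro h
    have h5 := congrArg Complex.im h
    rw [ht₄im] at h5
    exact hr₂ (by linarith)
  · intro h
    rw [ht₃, ht₄] at h
    have h5 := congrArg (starRingEnd ℂ) h
    simp only [Complex.conj_conj] at h5
    apply hcne
    rw [ht₁, ht₂] at h5
    linear_combination h5
  · rw [ht₃im]; simpa using hr₁
  · rw [ht₄im]; simpa using hr₂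
end

section
/- For real z < -9/4, if the four (non-real) complex roots of D(t,z) = z^2 t^4 + (-2z-36) t^3 + (49-2z) t^2 - 14t + 1 are written as r e^{±iθ} and ρ e^{±iφ} with r, ρ > 0, then r ≠ ρ; i.e., the two conjugate pairs of roots have distinct moduli. -/
open Complex

/-- For real `z < -9/4`, if the four non-real roots of
`D(t,z) = z²t⁴ + (-2z-36)t³ + (49-2z)t² - 14t + 1` are written as `r e^{±iθ}` and
`ρ e^{±iφ}` with `r, ρ > 0`, then `r ≠ ρ`. -/
theorem queen_quartic_moduli_distinct (z : ℝ) (hz : z < -9/4)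
    (r ρ θ φ : ℝ) (hr : 0 < r) (hρ : 0 < ρ)
    (ht₁ : ((r : ℂ) * Complex.exp (θ * Complex.I)).im ≠ 0)
    (ht₃ : ((ρ : ℂ) * Complex.exp (φ * Complex.I)).im ≠ 0)
    (hfac : ∀ t : ℂ,
      (z : ℂ) ^ 2 * t ^ 4 + (-2 * z - 36) * t ^ 3 + (49 - 2 * z) * t ^ 2 - 14 * t + 1
        = (z : ℂ) ^ 2 * (t - r * Complex.exp (θ * Complex.I))
            * (t - r * Complex.exp (-θ * Complex.I))
            * (t - ρ * Complex.exp (φ * Complex.I))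
            * (t - ρ * Complex.exp (-φ * Complex.I))) :
    r ≠ ρ := by
  intro hrρ
  subst hrρ
  set A : ℂ := Complex.exp (θ * Complex.I) with hA
  set B : ℂ := Complex.exp (-θ * Complex.I) with hB
  set C : ℂ := Complex.exp (φ * Complex.I) with hC
  set D : ℂ := Complex.exp (-φ * Complex.I) with hD
  have hAB : A * B = 1 := by
    rw [hA, hB, ← Complex.exp_add]
    norm_num
  have hCD : C * D = 1 := by
    rw [hC, hD, ← Complex.exp_add]
    norm_num
  have h0 := hfac 0
  have h1 := hfac 1
  have hm1 := hfac (-1)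
  have h2 := hfac 2
  have hm2 := hfac (-2)
  -- product of roots:  z² r⁴ = 1
  have key1 : (z : ℂ) ^ 2 * (r : ℂ) ^ 4 = 1 := by
    linear_combination (-1 : ℂ) * h0 - (z:ℂ)^2*(r:ℂ)^4*C*D*hAB - (z:ℂ)^2*(r:ℂ)^4*hCD
  -- combining the t¹ and t³ coefficients:  r² (2z + 36) = 14
  have key2 : (r : ℂ) ^ 2 * (2 * (z : ℂ) + 36) = 14 := by
    linear_combination ((2/3 : ℂ) + (r:ℂ)^2/6) * (h1 - hm1)
      + (-(1/12 : ℂ) - (r:ℂ)^2/12) * (h2 - hm2)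
      - (z:ℂ)^2*(r:ℂ)^3*(A+B)*hCD - (z:ℂ)^2*(r:ℂ)^3*(C+D)*hAB
  -- pass to real equations
  have k1 : z ^ 2 * r ^ 4 = 1 := by exact_mod_cast key1
  have k2 : r ^ 2 * (2 * z + 36) = 14 := by exact_mod_cast key2
  -- derive contradiction
  nlinarith [sq_nonneg (z * r ^ 2 + 1), sq_nonneg (z * r ^ 2 - 1), sq_nonneg r,
    mul_pos hr hr, sq_nonneg (3 * r ^ 2 - 1), sq_nonneg (9 * r ^ 2 - 4)]
end

section
/- Let z < -9/4 and let t_1, t_3 be the upper-half-plane roots of D(t,z) with |t_1| < |t_3|, and t_2 = \bar{t_1}, t_4 = \bar{t_3}. Then for every natural number m, |A/t_1^{m+1}| > |C/t_3^{m+1}|, where A = 1/((t_1-t_2)(t_1-t_3)(t_1-t_4)) and C = 1/((t_3-t_1)(t_3-t_2)(t_3-t_4)). -/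
set_option maxHeartbeats 1600000


/-- For real `z < -9/4` with conjugate root pairs `t₁ = conj t₂`, `t₃ = conj t₄` of
`D(t,z)`, `t₁, t₃` in the upper half-plane and `|t₁| < |t₃|`, for every `m : ℕ` the
partial fraction terms satisfy `|A/t₁^{m+1}| > |C/t₃^{m+1}|`. -/
theorem queen_dominant_term (z : ℝ) (hz : z < -9/4) (t₁ t₃ : ℂ)
    (h1 : 0 < t₁.im) (h3 : 0 < t₃.im)
    (habs : ‖t₁‖ < ‖t₃‖)
    (hfac : ∀ t : ℂ,
      (z : ℂ) ^ 2 * t ^ 4 + (-2 * z - 36) * t ^ 3 + (49 - 2 * z) * t ^ 2 - 14 * t + 1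
        = (z : ℂ) ^ 2 * (t - t₁) * (t - (starRingEnd ℂ) t₁)
            * (t - t₃) * (t - (starRingEnd ℂ) t₃)) :
    ∀ m : ℕ,
      ‖((1 / ((t₁ - (starRingEnd ℂ) t₁) * (t₁ - t₃) * (t₁ - (starRingEnd ℂ) t₃)))
            / t₁ ^ (m + 1))‖
      > ‖((1 / ((t₃ - t₁) * (t₃ - (starRingEnd ℂ) t₁) * (t₃ - (starRingEnd ℂ) t₃)))
            / t₃ ^ (m + 1))‖ := by
  set a := t₁.re with ha
  set b := t₁.im with hb
  set c := t₃.re with hc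
  set d := t₃.im with hd
  -- Real form of the factorization at real points
  have key : ∀ x : ℝ, z^2*x^4 + (-2*z-36)*x^3 + (49-2*z)*x^2 - 14*x + 1
      = z^2*((x-a)^2+b^2)*((x-c)^2+d^2) := by
    intro x
    have h := hfac (x : ℂ)
    have e1 : t₁ + (starRingEnd ℂ) t₁ = 2*(a:ℂ) := by
      rw [Complex.add_conj]; push_cast; ring
    have e2 : t₁ * (starRingEnd ℂ) t₁ = (a:ℂ)^2+(b:ℂ)^2 := by
      rw [Complex.mul_conj, Complex.normSq_apply]; push_cast; ring
    have e3 : t₃ + (starRingEnd ℂ) t₃ = 2*(c:ℂ) := by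
      rw [Complex.add_conj]; push_cast; ring
    have e4 : t₃ * (starRingEnd ℂ) t₃ = (c:ℂ)^2+(d:ℂ)^2 := by
      rw [Complex.mul_conj, Complex.normSq_apply]; push_cast; ring
    have hC : ((z^2*x^4 + (-2*z-36)*x^3 + (49-2*z)*x^2 - 14*x + 1 : ℝ) : ℂ)
        = ((z^2*((x-a)^2+b^2)*((x-c)^2+d^2) : ℝ) : ℂ) := by
      push_cast
      linear_combination h
        + (-(z:ℂ)^2*(((x:ℂ))-t₃)*(((x:ℂ))-(starRingEnd ℂ) t₃)*(x:ℂ))*e1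
        + ((z:ℂ)^2*(((x:ℂ))-t₃)*(((x:ℂ))-(starRingEnd ℂ) t₃))*e2
        + (-(z:ℂ)^2*(((x:ℂ)-(a:ℂ))^2+(b:ℂ)^2)*(x:ℂ))*e3
        + ((z:ℂ)^2*(((x:ℂ)-(a:ℂ))^2+(b:ℂ)^2))*e4
    exact_mod_cast hC
  have k0 := key 0
  have k1 := key 1
  have km1 := key (-1)
  have k2 := key 2
  have km2 := key (-2)
  -- elementary symmetric identities
  have h1p : z^2*(a+c) = z+18 := by
    linear_combination (1/24)*k2 - (1/24)*km2 - (1/12)*k1 + (1/12)*km1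
  have h3p : z^2*(a*(c^2+d^2)+c*(a^2+b^2)) = 7 := by
    linear_combination (1/3)*k1 - (1/3)*km1 - (1/24)*k2 + (1/24)*km2
  have h2p : z^2*((a^2+b^2)+(c^2+d^2)+4*(a*c)) = 49-2*z := by
    linear_combination -(1/2)*k1 - (1/2)*km1 + k0
  have h4p : z^2*((a^2+b^2)*(c^2+d^2)) = 1 := by linear_combination -k0
  have hM : z^2*((c-a)*((c^2+d^2)-(a^2+b^2)))
      = (z+18)*((a^2+b^2)+(c^2+d^2)) - 14 := by
    linear_combination ((a^2+b^2)+(c^2+d^2))*h1p - 2*h3p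
  have hv : z^2*((c-a)^2)
      = z^2*(a+c)^2 + z^2*((a^2+b^2)+(c^2+d^2)) - (49-2*z) := by
    linear_combination -h2p
  have hzneg : z < 0 := by linarith
  have hbpos : 0 < b := h1
  have hdpos : 0 < d := h3
  have hr1pos : 0 < a^2+b^2 := by positivity
  have hr3pos : 0 < c^2+d^2 := by positivity
  have hr : a^2+b^2 < c^2+d^2 := by
    have hn1 : ‖t₁‖ ^ 2 = a^2+b^2 := by
      rw [Complex.sq_norm, Complex.normSq_apply]; ring
    have hn3 : ‖t₃‖ ^ 2 = c^2+d^2 := by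
      rw [Complex.sq_norm, Complex.normSq_apply]; ring
    rw [← hn1, ← hn3]
    exact pow_lt_pow_left₀ habs (norm_nonneg t₁) (by norm_num)
  -- z*(a²+b²)+1 ≠ 0
  have hq : z*(a^2+b^2)+1 ≠ 0 := by
    intro h0
    have h0' : z*(a^2+b^2)+1 = 0 := h0
    have h3' : z*(c^2+d^2)+1 = 0 := by
      linear_combination (z*(c^2+d^2))*h0' - h4p
    have : a^2+b^2 = c^2+d^2 := by
      apply mul_left_cancel₀ (show z ≠ 0 from ne_of_lt hzneg)
      linarith
    linarith
  have hsq : 0 < (z*(a^2+b^2)+1)^2 := sq_pos_of_ne_zero hq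
  have haux : z^2*(a^2+b^2)^2*(c^2+d^2) = (a^2+b^2) := by
    linear_combination (a^2+b^2)*h4p
  have e0 : (a^2+b^2) + 2*z*((a^2+b^2)*(c^2+d^2)) + (c^2+d^2) > 0 := by
    have h' : 0 < (z*(a^2+b^2)+1)^2*(c^2+d^2) := mul_pos hsq hr3pos
    have hid : (z*(a^2+b^2)+1)^2*(c^2+d^2)
        = z^2*(a^2+b^2)^2*(c^2+d^2) + 2*z*((a^2+b^2)*(c^2+d^2)) + (c^2+d^2) := by
      ring
    linarith [h', hid, haux]
  have h2z : 2*z^3*((a^2+b^2)*(c^2+d^2)) = 2*z := by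
    linear_combination (2*z)*h4p
  have hz2pos : (0:ℝ) < z^2 := sq_pos_of_ne_zero (ne_of_lt hzneg)
  have hSgt : z^2*((a^2+b^2)+(c^2+d^2)) + 2*z > 0 := by
    have h' := mul_pos hz2pos e0
    have hid : z^2*((a^2+b^2) + 2*z*((a^2+b^2)*(c^2+d^2)) + (c^2+d^2))
        = z^2*((a^2+b^2)+(c^2+d^2)) + 2*z^3*((a^2+b^2)*(c^2+d^2)) := by ring
    linarith [h', hid, h2z]
  have hS : 0 < z^2*((a^2+b^2)+(c^2+d^2)) - 2*z - 9 := by linarith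
  -- key cubic factorization consequence
  have hKEY : z^2 * ((z^2*((a^2+b^2)+(c^2+d^2))-2*z-9)
      * (z^4*((a^2+b^2)+(c^2+d^2))^2
          + (4*z-40)*z^2*((a^2+b^2)+(c^2+d^2)) + 4*z^2-16*z+144)) = 0 := by
    linear_combination
      (-(z^4*(z^2*((c-a)*((c^2+d^2)-(a^2+b^2)))
          - ((z+18)*((a^2+b^2)+(c^2+d^2))-14))
        - 2*z^6*(c-a)*((c^2+d^2)-(a^2+b^2))))*hM
      + (-(z^6*((c^2+d^2)-(a^2+b^2))^2
          + 4*z^4*(z^2*((a^2+b^2)*(c^2+d^2)) - 1)))*hv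
      + (4*z^6*(c-a)^2)*h4p
      + (-((z^2*(a+c)+z+18)*(z^4*((c^2+d^2)-(a^2+b^2))^2
          + 4*z^2*(z^2*((a^2+b^2)*(c^2+d^2)) - 1))))*h1p
  have hQd : z^4*((a^2+b^2)+(c^2+d^2))^2
      + (4*z-40)*z^2*((a^2+b^2)+(c^2+d^2)) + 4*z^2-16*z+144 = 0 := by
    have hprod : (z^2 * (z^2*((a^2+b^2)+(c^2+d^2))-2*z-9))
        * (z^4*((a^2+b^2)+(c^2+d^2))^2
            + (4*z-40)*z^2*((a^2+b^2)+(c^2+d^2)) + 4*z^2-16*z+144) = 0 := by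
      linear_combination hKEY
    have hne : z^2 * (z^2*((a^2+b^2)+(c^2+d^2))-2*z-9) ≠ 0 :=
      ne_of_gt (mul_pos hz2pos hS)
    exact (mul_eq_zero.mp hprod).resolve_left hne
  -- the imaginary part comparison
  have hT2 : z^4*((c^2+d^2)-(a^2+b^2))*(d^2-b^2)
      = -((4*z+9)*(z-6)*((z-6)*((a^2+b^2)+(c^2+d^2))+2)) := by
    linear_combination hQd - 4*z^2*h4p - (z+18)*hM
      - ((z+18)*((a^2+b^2)+(c^2+d^2)) - 14
          + (z^2*((c-a)*((c^2+d^2)-(a^2+b^2)))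
            - ((z+18)*((a^2+b^2)+(c^2+d^2))-14)))*h1p
  have h6z : (0:ℝ) < 6-z := by linarith
  have h5 : z^2*2 < z^2*((6-z)*((a^2+b^2)+(c^2+d^2))) := by
    have h' := mul_pos h6z hSgt
    have hid : (6-z)*(z^2*((a^2+b^2)+(c^2+d^2))+2*z)
        = z^2*((6-z)*((a^2+b^2)+(c^2+d^2))) + 2*z*(6-z) := by ring
    linarith [h', hid]
  have h6' : 2 < (6-z)*((a^2+b^2)+(c^2+d^2)) := (mul_lt_mul_iff_right₀ hz2pos).mp h5
  have hlt : (z-6)*((a^2+b^2)+(c^2+d^2)) + 2 < 0 := by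
    have hid : (z-6)*((a^2+b^2)+(c^2+d^2)) = -((6-z)*((a^2+b^2)+(c^2+d^2))) := by
      ring
    linarith [hid]
  have hXpos : 0 < (4*z+9)*(z-6) :=
    mul_pos_of_neg_of_neg (by linarith) (by linarith)
  have hMpos : 0 < (c^2+d^2)-(a^2+b^2) := by linarith
  have hpos : 0 < z^4*((c^2+d^2)-(a^2+b^2))*(d^2-b^2) := by
    rw [hT2]
    have h' := mul_pos hXpos (neg_pos.mpr hlt)
    have hid : (4*z+9)*(z-6) * -((z-6)*((a^2+b^2)+(c^2+d^2))+2)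
        = -((4*z+9)*(z-6)*((z-6)*((a^2+b^2)+(c^2+d^2))+2)) := by ring
    linarith [h', hid]
  have hz4pos : (0:ℝ) < z^4 := by
    have := pow_pos hz2pos 2
    have hid : (z^2)^2 = z^4 := by ring
    linarith [this, hid]
  have hzM : 0 < z^4*((c^2+d^2)-(a^2+b^2)) := mul_pos hz4pos hMpos
  have hdb2 : b^2 < d^2 := by
    by_contra hcon
    push_neg at hcon
    have h' : z^4*((c^2+d^2)-(a^2+b^2)) * (d^2-b^2) ≤ 0 :=
      mul_nonpos_iff.mpr (Or.inl ⟨hzM.le, by linarith⟩)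
    have hid : z^4*((c^2+d^2)-(a^2+b^2)) * (d^2-b^2)
        = z^4*((c^2+d^2)-(a^2+b^2))*(d^2-b^2) := by ring
    linarith [h', hid]
  have hbd : b < d := by
    by_contra hcon
    push_neg at hcon
    have := pow_le_pow_left₀ hdpos.le hcon 2
    linarith
  -- endgame
  intro m
  have habs1 : ‖t₁ - (starRingEnd ℂ) t₁‖ = 2*b := by
    rw [Complex.sub_conj]
    rw [norm_mul, Complex.norm_real, Complex.norm_I, Real.norm_eq_abs]
    rw [abs_of_pos (by linarith : (0:ℝ) < 2*t₁.im)]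
    ring
  have habs3 : ‖t₃ - (starRingEnd ℂ) t₃‖ = 2*d := by
    rw [Complex.sub_conj]
    rw [norm_mul, Complex.norm_real, Complex.norm_I, Real.norm_eq_abs]
    rw [abs_of_pos (by linarith : (0:ℝ) < 2*t₃.im)]
    ring
  set K := ‖t₁ - t₃‖ with hK
  set L := ‖t₁ - (starRingEnd ℂ) t₃‖ with hL
  have hK3 : ‖t₃ - t₁‖ = K := norm_sub_rev t₃ t₁
  have hL3 : ‖t₃ - (starRingEnd ℂ) t₁‖ = L := by
    calc ‖t₃ - (starRingEnd ℂ) t₁‖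
        = ‖(starRingEnd ℂ) (t₃ - (starRingEnd ℂ) t₁)‖ :=
          (Complex.norm_conj _).symm
      _ = ‖(starRingEnd ℂ) t₃ - t₁‖ := by
          rw [map_sub, Complex.conj_conj]
      _ = L := norm_sub_rev _ _
  have hKpos : 0 < K := by
    apply norm_pos_iff.mpr
    intro h
    rw [sub_eq_zero] at h
    rw [h] at habs
    exact lt_irrefl _ habs
  have hLpos : 0 < L := by
    apply norm_pos_iff.mpr
    intro h
    rw [sub_eq_zero] at h
    have := congrArg Complex.im h
    rw [Complex.conj_im] at this
    rw [← hb, ← hd] at this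
    linarith
  have hxpos : 0 < ‖t₁‖ := by
    apply norm_pos_iff.mpr
    intro h
    rw [hb, h] at h1
    simp at h1
  have hypos : 0 < ‖t₃‖ := lt_trans hxpos habs
  rw [norm_div, norm_div, norm_div, norm_div, norm_pow, norm_pow, norm_one]
  rw [norm_mul, norm_mul, norm_mul, norm_mul]
  rw [habs1, habs3, hK3, hL3]
  rw [div_div, div_div]
  have hpow : ‖t₁‖ ^ (m+1) < ‖t₃‖ ^ (m+1) :=
    pow_lt_pow_left₀ habs (norm_nonneg t₁) (Nat.succ_ne_zero m)
  have hP1 : 0 < 2*b*K*L := by positivity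
  have hKL : 0 < K*L := mul_pos hKpos hLpos
  have hP : 2*b*K*L < K*L*(2*d) := by
    have h' := (mul_lt_mul_iff_right₀ hKL).mpr (show 2*b < 2*d by linarith)
    have hid : K*L*(2*b) = 2*b*K*L := by ring
    linarith [h', hid]
  have hmain : 2*b*K*L * ‖t₁‖ ^ (m+1) < K*L*(2*d) * ‖t₃‖ ^ (m+1) :=
    mul_lt_mul'' hP hpow (le_of_lt hP1) (le_of_lt (pow_pos hxpos _))
  exact one_div_lt_one_div_of_lt (by positivity) hmain
end

section
/- Let z < -9/4 and let t_1 = \bar{t_2}, t_3 = \bar{t_4} be the conjugate pairs of roots of D(t,z), with t_1, t_3 in the upper half-plane and |t_1| < |t_3|. Writing Arg(t_1) = θ and Arg(t_3) = φ, we have sin φ ≠ sin θ; in particular neither φ = θ nor φ = π - θ holds. -/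
open Complex

/-- For real `z < -9/4` with conjugate root pairs `t₁ = conj t₂`, `t₃ = conj t₄` of
`D(t,z)`, `t₁, t₃` in the upper half-plane and `|t₁| < |t₃|`, writing `θ = Arg t₁`
and `φ = Arg t₃`, we have `sin φ ≠ sin θ`; in particular `φ ≠ θ` and `φ ≠ π - θ`. -/
theorem queen_args_sin_ne (z : ℝ) (hz : z < -9/4) (t₁ t₃ : ℂ)
    (h1 : 0 < t₁.im) (h3 : 0 < t₃.im)
    (habs : ‖t₁‖ < ‖t₃‖)
    (hfac : ∀ t : ℂ,
      (z : ℂ) ^ 2 * t ^ 4 + (-2 * z - 36) * t ^ 3 + (49 - 2 * z) * t ^ 2 - 14 * t + 1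
        = (z : ℂ) ^ 2 * (t - t₁) * (t - (starRingEnd ℂ) t₁)
            * (t - t₃) * (t - (starRingEnd ℂ) t₃)) :
    Real.sin t₃.arg ≠ Real.sin t₁.arg ∧
    t₃.arg ≠ t₁.arg ∧ t₃.arg ≠ Real.pi - t₁.arg := by
  -- complex Vieta identities
  have I1 : (z : ℂ)^2 * ((t₁ + (starRingEnd ℂ) t₁) + (t₃ + (starRingEnd ℂ) t₃))
      = 2*z + 36 := by
    linear_combination (1/12 : ℂ) * hfac 2 - (1/12 : ℂ) * hfac (-2)
      - (1/6 : ℂ) * hfac 1 + (1/6 : ℂ) * hfac (-1)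
  have I3 : (z : ℂ)^2 * ((t₁ * (starRingEnd ℂ) t₁) * (t₃ + (starRingEnd ℂ) t₃)
      + (t₁ + (starRingEnd ℂ) t₁) * (t₃ * (starRingEnd ℂ) t₃)) = 14 := by
    linear_combination (2/3 : ℂ) * hfac 1 - (2/3 : ℂ) * hfac (-1)
      - (1/12 : ℂ) * hfac 2 + (1/12 : ℂ) * hfac (-2)
  have I0 : (z : ℂ)^2 * ((t₁ * (starRingEnd ℂ) t₁) * (t₃ * (starRingEnd ℂ) t₃)) = 1 := by
    linear_combination - hfac 0
  rw [Complex.add_conj, Complex.add_conj] at I1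
  rw [Complex.mul_conj, Complex.add_conj, Complex.add_conj, Complex.mul_conj] at I3
  rw [Complex.mul_conj, Complex.mul_conj] at I0
  have R1 : z^2 * (2*t₁.re + 2*t₃.re) = 2*z + 36 := by exact_mod_cast I1
  have R3 : z^2 * (Complex.normSq t₁ * (2*t₃.re) + (2*t₁.re) * Complex.normSq t₃) = 14 := by
    exact_mod_cast I3
  have R0 : z^2 * (Complex.normSq t₁ * Complex.normSq t₃) = 1 := by exact_mod_cast I0
  set r := ‖t₁‖ with hr
  set ρ := ‖t₃‖ with hρ
  have ht1ne : t₁ ≠ 0 := fun h => by simp [h] at h1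
  have ht3ne : t₃ ≠ 0 := fun h => by simp [h] at h3
  have hrpos : 0 < r := norm_pos_iff.mpr ht1ne
  have hρpos : 0 < ρ := norm_pos_iff.mpr ht3ne
  have hn1 : Complex.normSq t₁ = r^2 := (Complex.sq_norm t₁).symm
  have hn3 : Complex.normSq t₃ = ρ^2 := (Complex.sq_norm t₃).symm
  rw [hn1, hn3] at R3 R0
  have hr2 : r^2 = t₁.re^2 + t₁.im^2 := by
    rw [← hn1, Complex.normSq_apply]; ring
  have hρ2 : ρ^2 = t₃.re^2 + t₃.im^2 := by
    rw [← hn3, Complex.normSq_apply]; ring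
  -- z * (r * ρ) = -1
  have hz1 : z * (r * ρ) = -1 := by
    have hfac0 : (z * (r * ρ) + 1) * (z * (r * ρ) - 1) = 0 := by linear_combination R0
    rcases mul_eq_zero.mp hfac0 with h | h
    · linarith
    · nlinarith [mul_pos hrpos hρpos]
  have key : Real.sin t₃.arg ≠ Real.sin t₁.arg := by
    intro hsin
    rw [Complex.sin_arg, Complex.sin_arg] at hsin
    have hY : t₃.im * r = t₁.im * ρ := by
      field_simp at hsin
      linarith [hsin]
    have hsq : (t₃.re * r + t₁.re * ρ) * (t₃.re * r - t₁.re * ρ) = 0 := by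
      linear_combination (-(r^2)) * hρ2 + (ρ^2) * hr2 + (-(t₃.im*r + t₁.im*ρ)) * hY
    rcases mul_eq_zero.mp hsq with h | h
    · -- t₃.re * r = - t₁.re * ρ  (cos φ = -cos θ case) ⇒ z = 3
      have hkey : r * (12*z - 36) = 0 := by
        linear_combination (-(z*r)) * R3 + r * R1
          + (2*z^2*t₁.re*ρ - 2*z^2*r*t₁.re) * hz1 + (-2*z^2 + 2*z^3*r^2) * h
      nlinarith [mul_pos hrpos (show (0:ℝ) < -(12*z - 36) by linarith)]
    · -- t₃.re * r = t₁.re * ρ ⇒ z = -9/4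
      have hkey : r * (16*z + 36) = 0 := by
        linear_combination (-(z*r)) * R3 - r * R1
          + (2*z^2*t₁.re*ρ + 2*z^2*r*t₁.re) * hz1 + (2*z^2 + 2*z^3*r^2) * h
      nlinarith [mul_pos hrpos (show (0:ℝ) < -(16*z + 36) by linarith)]
  refine ⟨key, ?_, ?_⟩
  · intro h; exact key (by rw [h])
  · intro h; exact key (by rw [h, Real.sin_pi_sub])
end

section
/- Let t_1(z) denote the root of D(t,z) = z^2 t^4 + (-2z-36)t^3 + (49-2z)t^2 - 14t + 1 in the upper half-plane of smallest modulus, for real z < -9/4. Then lim_{z→-∞} z · t_1(z)^2 = 1; in particular t_1(z) ~ i/√(-z) as z → -∞. -/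
open Filter

/-- Let `t₁ z` denote, for each real `z < -9/4`, the root of
`D(t,z) = z²t⁴ + (-2z-36)t³ + (49-2z)t² - 14t + 1` in the upper half-plane of
smallest modulus. Then `z * (t₁ z)² → 1` as `z → -∞`. -/
theorem queen_root_asymptotics (t₁ : ℝ → ℂ)
    (hroot : ∀ z : ℝ, z < -9/4 →
      (z : ℂ) ^ 2 * (t₁ z) ^ 4 + (-2 * z - 36) * (t₁ z) ^ 3
        + (49 - 2 * z) * (t₁ z) ^ 2 - 14 * (t₁ z) + 1 = 0)
    (hupper : ∀ z : ℝ, z < -9/4 → 0 < (t₁ z).im)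
    (hmin : ∀ z : ℝ, z < -9/4 → ∀ t : ℂ,
      (z : ℂ) ^ 2 * t ^ 4 + (-2 * z - 36) * t ^ 3 + (49 - 2 * z) * t ^ 2 - 14 * t + 1 = 0 →
      0 < t.im → ‖t₁ z‖ ≤ ‖t‖) :
    Tendsto (fun z : ℝ => (z : ℂ) * (t₁ z) ^ 2) atBot (nhds 1) := by
  -- Step 1 : a quantitative bound on the root for very negative `z`.
  have key : ∀ z : ℝ, z ≤ -100 → ‖t₁ z‖ ≤ 1 ∧ ‖t₁ z‖ ^ 4 ≤ 6 / (-z) := by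
    intro z hz
    have hz' : z < -9/4 := by linarith
    have heq := hroot z hz'
    set t := t₁ z with ht
    set r := ‖t‖ with hrdef
    have hr0 : 0 ≤ r := norm_nonneg t
    have he2 : (z:ℂ)^2 * t^4
        = -((-2*(z:ℂ)-36)*t^3 + ((49:ℂ)-2*(z:ℂ))*t^2 + (-(14:ℂ))*t + 1) := by
      linear_combination heq
    have hA : ‖(-2*(z:ℂ)-36)‖ = -2*z-36 := by
      have h : (-2*(z:ℂ)-36) = ((-2*z-36 : ℝ) : ℂ) := by push_cast; ring
      rw [h, Complex.norm_real]
      exact abs_of_nonneg (by linarith)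
    have hB : ‖((49:ℂ)-2*(z:ℂ))‖ = 49-2*z := by
      have h : ((49:ℂ)-2*(z:ℂ)) = ((49-2*z : ℝ) : ℂ) := by push_cast; ring
      rw [h, Complex.norm_real]
      exact abs_of_nonneg (by linarith)
    have hr4 : z^2 * r^4 ≤ (-2*z-36)*r^3 + (49-2*z)*r^2 + 14*r + 1 := by
      have hL : ‖(z:ℂ)^2 * t^4‖ = z^2 * r^4 := by
        rw [norm_mul, norm_pow, norm_pow, Complex.norm_real, Real.norm_eq_abs, sq_abs]
      calc z^2 * r^4 = ‖(z:ℂ)^2 * t^4‖ := hL.symm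
        _ = ‖(-2*(z:ℂ)-36)*t^3 + ((49:ℂ)-2*(z:ℂ))*t^2 + (-(14:ℂ))*t + 1‖ := by
            rw [he2, norm_neg]
        _ ≤ ‖(-2*(z:ℂ)-36)*t^3 + ((49:ℂ)-2*(z:ℂ))*t^2 + (-(14:ℂ))*t‖ + ‖(1:ℂ)‖ :=
            norm_add_le _ _
        _ ≤ (‖(-2*(z:ℂ)-36)*t^3 + ((49:ℂ)-2*(z:ℂ))*t^2‖ + ‖(-(14:ℂ))*t‖) + ‖(1:ℂ)‖ := by
            gcongr
            exact norm_add_le _ _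
        _ ≤ ((‖(-2*(z:ℂ)-36)*t^3‖ + ‖((49:ℂ)-2*(z:ℂ))*t^2‖) + ‖(-(14:ℂ))*t‖) + ‖(1:ℂ)‖ := by
            gcongr
            exact norm_add_le _ _
        _ = (-2*z-36)*r^3 + (49-2*z)*r^2 + 14*r + 1 := by
            rw [norm_mul, norm_mul, norm_mul, norm_pow, norm_pow, hA, hB, norm_neg,
              norm_one]
            have h14 : ‖(14:ℂ)‖ = 14 := by
              rw [show (14:ℂ) = ((14:ℝ):ℂ) by norm_num, Complex.norm_real]
              norm_num
            rw [h14, ← hrdef]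
    have hc1 : (0:ℝ) ≤ -2*z-36 := by linarith
    have hc2 : (0:ℝ) ≤ 49-2*z := by linarith
    have hle1 : r ≤ 1 := by
      by_contra h
      push_neg at h
      have h1r : 1 ≤ r := h.le
      have h13 : (1:ℝ) ≤ r^3 := by nlinarith
      have h23 : r^2 ≤ r^3 := pow_le_pow_right₀ h1r (by norm_num)
      have h113 : r ≤ r^3 := by
        calc r = r^1 := (pow_one r).symm
          _ ≤ r^3 := pow_le_pow_right₀ h1r (by norm_num)
      have h34 : r^3 ≤ r^4 := pow_le_pow_right₀ h1r (by norm_num)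
      have h3pos : 0 < r^3 := by positivity
      have e1 : z^2 * r^4 ≤ (-4*z+28) * r^3 := by nlinarith
      have e2 : -4*z+28 < z^2 := by nlinarith
      have e3 : (-4*z+28) * r^3 < z^2 * r^3 := by
        exact mul_lt_mul_of_pos_right e2 h3pos
      have e4 : z^2 * r^3 ≤ z^2 * r^4 := by nlinarith [sq_nonneg z]
      linarith
    have h13 : r^3 ≤ 1 := pow_le_one₀ hr0 hle1
    have h12 : r^2 ≤ 1 := pow_le_one₀ hr0 hle1
    refine ⟨hle1, ?_⟩
    have h4 : z^2 * r^4 ≤ -6*z := by nlinarith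
    have hzpos : (0:ℝ) < -z := by linarith
    rw [le_div_iff₀ hzpos]
    nlinarith
  -- Step 2 : the norm of the root tends to 0.
  have hg : Tendsto (fun z : ℝ => ‖t₁ z‖) atBot (nhds 0) := by
    rw [Metric.tendsto_nhds]
    intro ε hε
    set δ := min ε 1 with hδdef
    have hδ0 : 0 < δ := lt_min hε one_pos
    rw [eventually_atBot]
    refine ⟨min (-100) (-(6/δ^4) - 1), ?_⟩
    intro z hzb
    have hz1 : z ≤ -100 := le_trans hzb (min_le_left _ _)
    have hz2 : z ≤ -(6/δ^4) - 1 := le_trans hzb (min_le_right _ _)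
    obtain ⟨hr1, hr4⟩ := key z hz1
    have hδ4 : 0 < δ^4 := by positivity
    have hzpos : (0:ℝ) < -z := by linarith
    have h6 : 6 / (-z) < δ^4 := by
      rw [div_lt_iff₀ hzpos]
      have hcancel : (6/δ^4) * δ^4 = 6 := div_mul_cancel₀ 6 (ne_of_gt hδ4)
      nlinarith [hz2, hδ4, hcancel]
    have hlt : ‖t₁ z‖^4 < δ^4 := lt_of_le_of_lt hr4 h6
    have hrδ : ‖t₁ z‖ < δ := by
      by_contra h
      push_neg at h
      have := pow_le_pow_left₀ hδ0.le h 4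
      linarith
    rw [Real.dist_eq, sub_zero, abs_of_nonneg (norm_nonneg _)]
    exact lt_of_lt_of_le hrδ (min_le_left _ _)
  -- Step 3 : conclude using the identity (z t² - t - 1)² = 16 t - 48 t² + 36 t³.
  rw [tendsto_iff_dist_tendsto_zero]
  have hF : Tendsto (fun z : ℝ =>
      ‖t₁ z‖ + Real.sqrt (‖t₁ z‖ * (16 + 48 * ‖t₁ z‖ + 36 * ‖t₁ z‖^2))) atBot (nhds 0) := by
    have hcont : Continuous (fun x : ℝ => x + Real.sqrt (x * (16 + 48*x + 36*x^2))) := by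
      apply Continuous.add continuous_id
      exact Real.continuous_sqrt.comp (by fun_prop)
    have h0 : (fun x : ℝ => x + Real.sqrt (x * (16 + 48*x + 36*x^2))) 0 = 0 := by
      simp
    have h := (hcont.tendsto 0).comp hg
    have h0' : (0:ℝ) + Real.sqrt (0*(16+48*0+36*0^2)) = 0 := by
      norm_num
    rw [h0'] at h
    exact h
  apply squeeze_zero' (Eventually.of_forall (fun z => dist_nonneg)) ?_ hF
  rw [eventually_atBot]
  refine ⟨-100, ?_⟩
  intro z hz
  have hz' : z < -9/4 := by linarith
  have heq := hroot z hz'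
  set t := t₁ z with ht
  set r := ‖t‖ with hrdef
  have hr0 : 0 ≤ r := norm_nonneg t
  set w : ℂ := (z:ℂ) * t^2 with hw
  have hq : (w - t - 1)^2 = 16*t - 48*t^2 + 36*t^3 := by
    rw [hw]; linear_combination heq
  have h1 : ‖w - t - 1‖^2 = ‖(16:ℂ)*t - 48*t^2 + 36*t^3‖ := by
    rw [← norm_pow, hq]
  have h2 : ‖(16:ℂ)*t - 48*t^2 + 36*t^3‖ ≤ r * (16 + 48*r + 36*r^2) := by
    calc ‖(16:ℂ)*t - 48*t^2 + 36*t^3‖ ≤ ‖(16:ℂ)*t - 48*t^2‖ + ‖(36:ℂ)*t^3‖ :=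
        norm_add_le _ _
      _ ≤ (‖(16:ℂ)*t‖ + ‖(48:ℂ)*t^2‖) + ‖(36:ℂ)*t^3‖ := by
          gcongr
          exact norm_sub_le _ _
      _ = 16*r + 48*r^2 + 36*r^3 := by
          rw [norm_mul, norm_mul, norm_mul, norm_pow, norm_pow]
          have h16 : ‖(16:ℂ)‖ = 16 := by
            rw [show (16:ℂ) = ((16:ℝ):ℂ) by norm_num, Complex.norm_real]; norm_num
          have h48 : ‖(48:ℂ)‖ = 48 := by
            rw [show (48:ℂ) = ((48:ℝ):ℂ) by norm_num, Complex.norm_real]; norm_num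
          have h36 : ‖(36:ℂ)‖ = 36 := by
            rw [show (36:ℂ) = ((36:ℝ):ℂ) by norm_num, Complex.norm_real]; norm_num
          rw [h16, h48, h36, ← hrdef]
      _ = r * (16 + 48*r + 36*r^2) := by ring
  have h3 : ‖w - t - 1‖ ≤ Real.sqrt (r * (16 + 48*r + 36*r^2)) := by
    rw [← Real.sqrt_sq (norm_nonneg (w - t - 1))]
    apply Real.sqrt_le_sqrt
    rw [h1]; exact h2
  calc dist ((z:ℂ) * t₁ z ^ 2) 1 = ‖w - 1‖ := by rw [dist_eq_norm, hw, ht]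
    _ = ‖t + (w - t - 1)‖ := by ring_nf
    _ ≤ ‖t‖ + ‖w - t - 1‖ := norm_add_le _ _
    _ ≤ r + Real.sqrt (r * (16 + 48*r + 36*r^2)) := by
        rw [← hrdef]; gcongr
end
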